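/- Let A ∈ M(2m,ℂ) be written in block form A = [[A₁₁,A₁₂],[A₂₁,A₂₂]] with m×m blocks, and let D(t) = diag(t·1ₘ, 1ₘ) for t > 0. Then det(D(t) + A) = tᵐ·det(A₂₂ + 1ₘ) + O(t^{m-1}) as t → ∞. More generally, if A = A(t) = t^{1/2}·X₁ + X₀ + t^{-1/2}·X₋₁ for fixed X₁,X₀,X₋₁ ∈ M(2m,ℂ), then det(diag(e^{ct^{1/2}}·1ₘ, e^{-ct^{1/2}}·1ₘ) + A(t)) = e^{mct^{1/2}}·(det([A(t)]₂₂) + O(t^{(m+1)/2}e^{-ct^{1/2}})) as t → ∞, for c > 0. -/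

import Mathlib

open Asymptotics Filter

section AuxStmt12
open Matrix Finset

lemma det_add_expand {n : Type*} [Fintype n] [DecidableEq n]
    (d : n → ℂ) (A : Matrix n n ℂ) :
    (Matrix.of (fun i => d i • (1 : Matrix n n ℂ) i) + A).det
      = ∑ s : Finset n, (∏ i ∈ s, d i) *
          (Matrix.of (s.piecewise (1 : Matrix n n ℂ) A)).det := by
  have h1 : (Matrix.of (fun i => d i • (1 : Matrix n n ℂ) i) + A).det
      = (Matrix.detRowAlternating (R := ℂ) (n := n)).toMultilinearMap
          ((fun i => d i • (1 : Matrix n n ℂ) i) + fun i => A i) := rfl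
  rw [h1, MultilinearMap.map_add_univ]
  refine Finset.sum_congr rfl fun s _ => ?_
  have h2 : s.piecewise (fun i => d i • (1 : Matrix n n ℂ) i) (fun i => A i)
      = s.piecewise (fun i => d i • (s.piecewise (1 : Matrix n n ℂ) A) i)
          (s.piecewise (1 : Matrix n n ℂ) A) := by
    funext i
    by_cases h : i ∈ s <;>
      simp [Finset.piecewise_eq_of_mem _ _ _ , Finset.piecewise, h]
  rw [h2, MultilinearMap.map_piecewise_smul]
  rfl

lemma fromBlocks_diag {α : Type*} [Fintype α] [DecidableEq α] (a b : ℂ) :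
    (Matrix.fromBlocks (a • (1 : Matrix α α ℂ)) 0 0 (b • (1 : Matrix α α ℂ)))
      = Matrix.of (fun i => (Sum.elim (fun _ : α => a) (fun _ : α => b) i) •
          (1 : Matrix (α ⊕ α) (α ⊕ α) ℂ) i) := by
  ext i j
  rcases i with i | i <;> rcases j with j | j <;>
    { simp [Matrix.one_apply, Pi.smul_apply, apply_ite]
      try { split <;> simp_all } }

lemma det_piecewise_L {α : Type*} [Fintype α] [DecidableEq α]
    (A : Matrix (α ⊕ α) (α ⊕ α) ℂ) :
    (Matrix.of ((Finset.univ.disjSum (∅ : Finset α)).piecewise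
        (1 : Matrix (α ⊕ α) (α ⊕ α) ℂ) A)).det = (Matrix.toBlocks₂₂ A).det := by
  have h : Matrix.of ((Finset.univ.disjSum (∅ : Finset α)).piecewise
        (1 : Matrix (α ⊕ α) (α ⊕ α) ℂ) A)
      = Matrix.fromBlocks 1 0 (Matrix.toBlocks₂₁ A) (Matrix.toBlocks₂₂ A) := by
    ext i j
    rcases i with i | i
    · rw [Matrix.of_apply]; erw [Finset.piecewise_eq_of_mem _ _ _ (by simp)]
      rcases j with j | j <;> simp [Matrix.one_apply]
    · rw [Matrix.of_apply]; erw [Finset.piecewise_eq_of_notMem _ _ _ (by simp)]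
      rcases j with j | j <;> simp [Matrix.toBlocks₂₁, Matrix.toBlocks₂₂]
  rw [h, Matrix.det_fromBlocks_zero₁₂]
  simp

lemma sqrt_tendsto : Tendsto Real.sqrt atTop atTop := by
  rw [tendsto_atTop]
  intro b
  filter_upwards [eventually_ge_atTop (max b 0 ^ 2)] with t ht
  calc b ≤ max b 0 := le_max_left _ _
    _ = Real.sqrt (max b 0 ^ 2) := (Real.sqrt_sq (le_max_right _ _)).symm
    _ ≤ Real.sqrt t := Real.sqrt_le_sqrt ht

lemma aux2 (c : ℝ) (hc : 0 < c) (a b : ℤ) (p r : ℕ) (hab : a ≤ b) (h : a = b → p ≤ r) :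
    ∀ᶠ u : ℝ in atTop, Real.exp ((a : ℝ) * (c * u)) * u ^ p
      ≤ Real.exp ((b : ℝ) * (c * u)) * u ^ r := by
  rcases eq_or_lt_of_le hab with heq | hlt
  · subst heq
    filter_upwards [eventually_ge_atTop (1 : ℝ)] with u hu
    exact mul_le_mul_of_nonneg_left (pow_le_pow_right₀ hu (h rfl)) (Real.exp_pos _).le
  · have hba : (0 : ℝ) < ((b - a : ℤ) : ℝ) * c := by
      apply mul_pos _ hc
      exact_mod_cast sub_pos.2 hlt
    have hlo := isLittleO_pow_exp_pos_mul_atTop p hba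
    filter_upwards [eventually_ge_atTop (1 : ℝ), hlo.def one_pos] with u hu hbd
    have hup : u ^ p ≤ Real.exp (((b - a : ℤ) : ℝ) * c * u) := by
      have h1 : ‖u ^ p‖ = u ^ p := Real.norm_of_nonneg (pow_nonneg (by linarith) _)
      have h2 : ‖Real.exp (((b - a : ℤ) : ℝ) * c * u)‖ = Real.exp _ :=
        Real.norm_of_nonneg (Real.exp_pos _).le
      simpa [h1, h2] using hbd
    calc Real.exp ((a : ℝ) * (c * u)) * u ^ p
        ≤ Real.exp ((a : ℝ) * (c * u)) * Real.exp (((b - a : ℤ) : ℝ) * c * u) :=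
          mul_le_mul_of_nonneg_left hup (Real.exp_pos _).le
      _ = Real.exp ((b : ℝ) * (c * u)) := by
          rw [← Real.exp_add]; congr 1; push_cast; ring
      _ ≤ Real.exp ((b : ℝ) * (c * u)) * u ^ r :=
          le_mul_of_one_le_right (Real.exp_pos _).le (one_le_pow₀ hu)

lemma det_bound {n : Type*} [Fintype n] [DecidableEq n] (M : Matrix n n ℂ) (B : n → ℝ)
    (hB : ∀ i j, ‖M i j‖ ≤ B i) :
    ‖M.det‖ ≤ (Nat.factorial (Fintype.card n)) * ∏ i, B i := by
  have hB0 : ∀ i, 0 ≤ B i := fun i => le_trans (norm_nonneg _) (hB i i)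
  rw [Matrix.det_apply]
  calc ‖∑ σ : Equiv.Perm n, Equiv.Perm.sign σ • ∏ i, M (σ i) i‖
      ≤ ∑ σ : Equiv.Perm n, ‖Equiv.Perm.sign σ • ∏ i, M (σ i) i‖ := norm_sum_le _ _
    _ ≤ ∑ σ : Equiv.Perm n, ∏ i, B i := by
        apply Finset.sum_le_sum
        intro σ _
        have h1 : ‖Equiv.Perm.sign σ • ∏ i, M (σ i) i‖ = ‖∏ i, M (σ i) i‖ := by
          rcases Int.units_eq_one_or (Equiv.Perm.sign σ) with h | h <;> simp [h]
        rw [h1, norm_prod]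
        calc ∏ i, ‖M (σ i) i‖ ≤ ∏ i, B (σ i) :=
              Finset.prod_le_prod (fun i _ => norm_nonneg _) (fun i _ => hB _ _)
          _ = ∏ i, B i := Equiv.prod_comp σ B
    _ = (Nat.factorial (Fintype.card n)) * ∏ i, B i := by
        rw [Finset.sum_const, Finset.card_univ, Fintype.card_perm, nsmul_eq_mul]


end AuxStmt12

/-- Determinant asymptotics with one exponentially dominant diagonal block:
`det(diag(t·1,1) + A) = tᵐ det(A₂₂ + 1) + O(t^{m-1})`, and for
`A(t) = t^{1/2} X₁ + X₀ + t^{-1/2} Xm`,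
`det(diag(e^{c√t}·1, e^{-c√t}·1) + A(t)) = e^{mc√t}(det [A(t)]₂₂ + O(t^{(m+1)/2} e^{-c√t}))`. -/
theorem stmt12 (m : ℕ) (hm : 1 ≤ m) (c : ℝ) (hc : 0 < c)
    (A₁₁ A₁₂ A₂₁ A₂₂ : Matrix (Fin m) (Fin m) ℂ)
    (X₁ X₀ Xm : Matrix (Fin m ⊕ Fin m) (Fin m ⊕ Fin m) ℂ) :
    ((fun t : ℝ =>
        Matrix.det (Matrix.fromBlocks ((t : ℂ) • (1 : Matrix (Fin m) (Fin m) ℂ)) 0 0 1 +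
            Matrix.fromBlocks A₁₁ A₁₂ A₂₁ A₂₂) -
          (t : ℂ) ^ m * Matrix.det (A₂₂ + 1))
      =O[atTop] fun t : ℝ => t ^ ((m : ℤ) - 1)) ∧
    ((fun t : ℝ =>
        Matrix.det
          (Matrix.fromBlocks
              (Complex.exp (c * Real.sqrt t) • (1 : Matrix (Fin m) (Fin m) ℂ)) 0 0
              (Complex.exp (-(c * Real.sqrt t)) • (1 : Matrix (Fin m) (Fin m) ℂ)) +
            ((Real.sqrt t : ℂ) • X₁ + X₀ + ((Real.sqrt t : ℂ))⁻¹ • Xm)) -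
          Complex.exp (m * c * Real.sqrt t) *
            Matrix.det (Matrix.toBlocks₂₂
              ((Real.sqrt t : ℂ) • X₁ + X₀ + ((Real.sqrt t : ℂ))⁻¹ • Xm)))
      =O[atTop] fun t : ℝ =>
        Real.exp (m * c * Real.sqrt t) * t ^ (((m : ℝ) + 1) / 2) *
          Real.exp (-(c * Real.sqrt t))) := by
  refine ⟨?_, ?_⟩
  · set A' : Matrix (Fin m ⊕ Fin m) (Fin m ⊕ Fin m) ℂ :=
      Matrix.fromBlocks A₁₁ A₁₂ A₂₁ (A₂₂ + 1) with hA'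
    set L : Finset (Fin m ⊕ Fin m) := Finset.univ.disjSum ∅ with hL
    have key : ∀ t : ℝ,
        Matrix.det (Matrix.fromBlocks ((t : ℂ) • (1 : Matrix (Fin m) (Fin m) ℂ)) 0 0 1 +
            Matrix.fromBlocks A₁₁ A₁₂ A₂₁ A₂₂) -
          (t : ℂ) ^ m * Matrix.det (A₂₂ + 1)
        = ∑ s ∈ Finset.univ.erase L,
            (∏ i ∈ s, Sum.elim (fun _ : Fin m => (t : ℂ)) (fun _ => 0) i) *
              (Matrix.of (s.piecewise (1 : Matrix (Fin m ⊕ Fin m) (Fin m ⊕ Fin m) ℂ) A')).det := by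
      intro t
      have hsplit : Matrix.fromBlocks ((t : ℂ) • (1 : Matrix (Fin m) (Fin m) ℂ)) 0 0 1 +
            Matrix.fromBlocks A₁₁ A₁₂ A₂₁ A₂₂
          = Matrix.fromBlocks ((t : ℂ) • (1 : Matrix (Fin m) (Fin m) ℂ)) 0 0
              ((0 : ℂ) • (1 : Matrix (Fin m) (Fin m) ℂ)) + A' := by
        rw [hA', Matrix.fromBlocks_add, Matrix.fromBlocks_add]
        congr 1 <;> simp [add_comm]
      rw [hsplit, fromBlocks_diag, det_add_expand]
      rw [← Finset.add_sum_erase Finset.univ _ (Finset.mem_univ L)]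
      have hprodL : (∏ i ∈ L, Sum.elim (fun _ : Fin m => (t : ℂ)) (fun _ => 0) i)
          = (t : ℂ) ^ m := by
        rw [hL, Finset.prod_disjSum]
        simp
      rw [hprodL, det_piecewise_L, hA', Matrix.toBlocks_fromBlocks₂₂]
      ring
    have : (fun t : ℝ =>
        ∑ s ∈ Finset.univ.erase L,
            (∏ i ∈ s, Sum.elim (fun _ : Fin m => (t : ℂ)) (fun _ => 0) i) *
              (Matrix.of (s.piecewise (1 : Matrix (Fin m ⊕ Fin m) (Fin m ⊕ Fin m) ℂ) A')).det)
        =O[atTop] fun t : ℝ => t ^ ((m : ℤ) - 1) := by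
      apply Asymptotics.IsBigO.fun_sum
      intro s hs
      rcases Finset.eq_empty_or_nonempty s.toRight with hr | hr
      · -- s ⊆ L, product is t^{card}
        have hcard : s.card ≤ m - 1 := by
          have hsub : s ≠ L := (Finset.mem_erase.1 hs).1
          have hle : s.toLeft.card ≤ m := by
            simpa using Finset.card_le_univ s.toLeft
          have hcardL : s.toLeft.card < m := by
            rcases lt_or_eq_of_le hle with h | h
            · exact h
            · exfalso
              have : s.toLeft = Finset.univ :=
                Finset.eq_univ_of_card _ (by simpa using h)
              exact hsub (by rw [← Finset.toLeft_disjSum_toRight (u := s), this, hr, hL])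
          have h1 := Finset.card_toLeft_add_card_toRight (u := s)
          have h2 : s.toRight.card = 0 := by rw [hr]; simp
          omega
        have hprod : ∀ t : ℝ, (∏ i ∈ s, Sum.elim (fun _ : Fin m => (t : ℂ)) (fun _ => 0) i)
            = (t : ℂ) ^ s.card := by
          intro t
          rw [← Finset.toLeft_disjSum_toRight (u := s), Finset.prod_disjSum]
          simp [hr, Finset.card_disjSum]
        simp only [hprod]
        apply Asymptotics.IsBigO.of_bound
          (‖(Matrix.of (s.piecewise (1 : Matrix (Fin m ⊕ Fin m) (Fin m ⊕ Fin m) ℂ) A')).det‖)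
        filter_upwards [eventually_ge_atTop (1 : ℝ)] with t ht
        have ht0 : (0:ℝ) ≤ t := by linarith
        rw [norm_mul, norm_pow, Complex.norm_real, Real.norm_of_nonneg ht0,
          Real.norm_of_nonneg (zpow_nonneg ht0 _), mul_comm,
          show ((m:ℤ)-1) = ((m-1 : ℕ) : ℤ) by omega, zpow_natCast]
        gcongr
        all_goals first | exact ht | exact hcard
      · obtain ⟨x, hx⟩ := hr
        have hz : ∀ t : ℝ, (∏ i ∈ s, Sum.elim (fun _ : Fin m => (t : ℂ)) (fun _ => 0) i) = 0 := by
          intro t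
          apply Finset.prod_eq_zero (i := Sum.inr x) (by simpa using hx)
          simp
        simp only [hz, zero_mul]
        exact isBigO_zero _ _
    rw [show (fun t : ℝ =>
        Matrix.det (Matrix.fromBlocks ((t : ℂ) • (1 : Matrix (Fin m) (Fin m) ℂ)) 0 0 1 +
            Matrix.fromBlocks A₁₁ A₁₂ A₂₁ A₂₂) -
          (t : ℂ) ^ m * Matrix.det (A₂₂ + 1)) = _ from funext key]
    exact this
  · set L : Finset (Fin m ⊕ Fin m) := Finset.univ.disjSum ∅ with hL
    set A : ℝ → Matrix (Fin m ⊕ Fin m) (Fin m ⊕ Fin m) ℂ :=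
      fun t => (Real.sqrt t : ℂ) • X₁ + X₀ + ((Real.sqrt t : ℂ))⁻¹ • Xm with hA
    set d : ℝ → (Fin m ⊕ Fin m) → ℂ := fun t =>
      Sum.elim (fun _ => Complex.exp (c * Real.sqrt t))
        (fun _ => Complex.exp (-(c * Real.sqrt t))) with hd
    have key : ∀ t : ℝ,
        Matrix.det
            (Matrix.fromBlocks
                (Complex.exp (c * Real.sqrt t) • (1 : Matrix (Fin m) (Fin m) ℂ)) 0 0
                (Complex.exp (-(c * Real.sqrt t)) • (1 : Matrix (Fin m) (Fin m) ℂ)) + A t) -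
            Complex.exp (m * c * Real.sqrt t) * Matrix.det (Matrix.toBlocks₂₂ (A t))
        = ∑ s ∈ Finset.univ.erase L,
            (∏ i ∈ s, d t i) *
              (Matrix.of (s.piecewise (1 : Matrix (Fin m ⊕ Fin m) (Fin m ⊕ Fin m) ℂ) (A t))).det := by
      intro t
      rw [fromBlocks_diag, det_add_expand, ← Finset.add_sum_erase Finset.univ _ (Finset.mem_univ L)]
      have hprodL : (∏ i ∈ L, d t i) = Complex.exp (m * c * Real.sqrt t) := by
        rw [hL, Finset.prod_disjSum]
        simp only [hd, Sum.elim_inl, Sum.elim_inr, Finset.prod_const, Finset.prod_empty,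
          Finset.card_univ, Fintype.card_fin, Finset.card_empty, pow_zero, mul_one]
        rw [← Complex.exp_nat_mul]
        congr 1
        push_cast
        ring
      rw [hprodL, det_piecewise_L]
      ring
    have hbig : (fun t : ℝ => ∑ s ∈ Finset.univ.erase L,
            (∏ i ∈ s, d t i) *
              (Matrix.of (s.piecewise (1 : Matrix (Fin m ⊕ Fin m) (Fin m ⊕ Fin m) ℂ) (A t))).det)
        =O[atTop] fun t : ℝ =>
          Real.exp (m * c * Real.sqrt t) * t ^ (((m : ℝ) + 1) / 2) *
            Real.exp (-(c * Real.sqrt t)) := by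
      apply Asymptotics.IsBigO.fun_sum
      intro s hs
      have hsub : s ≠ L := (Finset.mem_erase.1 hs).1
      set k₁ := s.toLeft.card with hk₁
      set k₂ := s.toRight.card with hk₂
      set p := sᶜ.card with hp
      have hcards : p + (k₁ + k₂) = 2 * m := by
        rw [hp, hk₁, hk₂, Finset.card_toLeft_add_card_toRight, Finset.card_compl]
        have h := Finset.card_le_univ s
        simp only [Finset.card_univ, Fintype.card_sum, Fintype.card_fin] at h ⊢
        omega
      have hk₁m : k₁ ≤ m := by simpa using Finset.card_le_univ s.toLeft
      have hne : k₁ ≠ m ∨ k₂ ≠ 0 := by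
        by_contra h
        push_neg at h
        apply hsub
        have h1 : s.toLeft = Finset.univ := Finset.eq_univ_of_card _ (by simpa using h.1)
        have h2 : s.toRight = ∅ := Finset.card_eq_zero.1 h.2
        rw [← Finset.toLeft_disjSum_toRight (u := s), h1, h2, hL]
      have hab : (k₁ : ℤ) - k₂ ≤ (m : ℤ) - 1 := by omega
      have himp : (k₁ : ℤ) - k₂ = (m : ℤ) - 1 → p ≤ m + 1 := by omega
      set K : ℝ := 1 + ∑ i : Fin m ⊕ Fin m, ∑ j : Fin m ⊕ Fin m,
        (‖X₁ i j‖ + ‖X₀ i j‖ + ‖Xm i j‖) with hK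
      have hKsum : (0:ℝ) ≤ ∑ i : Fin m ⊕ Fin m, ∑ j : Fin m ⊕ Fin m,
          (‖X₁ i j‖ + ‖X₀ i j‖ + ‖Xm i j‖) := by positivity
      have hK1 : 1 ≤ K := by rw [hK]; linarith
      have hK0 : 0 ≤ K := by linarith
      have hKij : ∀ i j, ‖X₁ i j‖ + ‖X₀ i j‖ + ‖Xm i j‖ ≤ K := by
        intro i j
        have h1 : ‖X₁ i j‖ + ‖X₀ i j‖ + ‖Xm i j‖
            ≤ ∑ j' : Fin m ⊕ Fin m, (‖X₁ i j'‖ + ‖X₀ i j'‖ + ‖Xm i j'‖) :=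
          Finset.single_le_sum (f := fun j' => ‖X₁ i j'‖ + ‖X₀ i j'‖ + ‖Xm i j'‖)
            (fun _ _ => by positivity) (Finset.mem_univ j)
        have h2 : ∑ j' : Fin m ⊕ Fin m, (‖X₁ i j'‖ + ‖X₀ i j'‖ + ‖Xm i j'‖)
            ≤ ∑ i' : Fin m ⊕ Fin m, ∑ j' : Fin m ⊕ Fin m,
                (‖X₁ i' j'‖ + ‖X₀ i' j'‖ + ‖Xm i' j'‖) :=
          Finset.single_le_sum
            (f := fun i' => ∑ j' : Fin m ⊕ Fin m, (‖X₁ i' j'‖ + ‖X₀ i' j'‖ + ‖Xm i' j'‖))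
            (fun _ _ => by positivity) (Finset.mem_univ i)
        rw [hK]; linarith
      apply Asymptotics.IsBigO.of_bound ((Nat.factorial (2 * m) : ℝ) * K ^ (2 * m))
      filter_upwards [eventually_ge_atTop (1 : ℝ),
        sqrt_tendsto.eventually (aux2 c hc ((k₁ : ℤ) - k₂) ((m : ℤ) - 1) p (m + 1) hab himp)]
        with t ht haux
      have ht0 : (0:ℝ) ≤ t := by linarith
      have hst1 : 1 ≤ Real.sqrt t := by
        rw [show (1:ℝ) = Real.sqrt 1 by simp]
        exact Real.sqrt_le_sqrt ht
      have hst0 : 0 ≤ Real.sqrt t := by linarith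
      have hprod : (∏ i ∈ s, d t i)
          = Complex.exp (c * Real.sqrt t) ^ k₁ * Complex.exp (-(c * Real.sqrt t)) ^ k₂ := by
        have h0 : (∏ i ∈ s, d t i) = ∏ i ∈ s.toLeft.disjSum s.toRight, d t i := by
          rw [Finset.toLeft_disjSum_toRight]
        rw [h0, Finset.prod_disjSum]
        simp [hd, hk₁, hk₂]
      have hdet : ‖(Matrix.of (s.piecewise (1 : Matrix (Fin m ⊕ Fin m) (Fin m ⊕ Fin m) ℂ)
            (A t))).det‖ ≤ (Nat.factorial (2 * m) : ℝ) * (Real.sqrt t * K) ^ p := by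
        have hBentry : ∀ i j, ‖(Matrix.of (s.piecewise
              (1 : Matrix (Fin m ⊕ Fin m) (Fin m ⊕ Fin m) ℂ) (A t))) i j‖
            ≤ (fun i => if i ∈ s then 1 else Real.sqrt t * K) i := by
          intro i j
          by_cases h : i ∈ s
          · rw [Matrix.of_apply]; erw [Finset.piecewise_eq_of_mem _ _ _ h]
            simp only [if_pos h, Matrix.one_apply]
            split <;> simp
          · rw [Matrix.of_apply]; erw [Finset.piecewise_eq_of_notMem _ _ _ h]
            simp only [if_neg h]
            have hentry : (A t) i j = (Real.sqrt t : ℂ) * X₁ i j + X₀ i j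
                + ((Real.sqrt t : ℂ))⁻¹ * Xm i j := by
              simp [hA, Matrix.add_apply, Matrix.smul_apply, smul_eq_mul]
            rw [hentry]
            have e1 : ‖(Real.sqrt t : ℂ) * X₁ i j‖ = Real.sqrt t * ‖X₁ i j‖ := by
              rw [norm_mul, Complex.norm_real, Real.norm_of_nonneg hst0]
            have e2 : ‖((Real.sqrt t : ℂ))⁻¹ * Xm i j‖ ≤ Real.sqrt t * ‖Xm i j‖ := by
              rw [norm_mul, norm_inv, Complex.norm_real, Real.norm_of_nonneg hst0]
              apply mul_le_mul_of_nonneg_right _ (norm_nonneg _)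
              calc (Real.sqrt t)⁻¹ ≤ 1 := inv_le_one_of_one_le₀ hst1
                _ ≤ Real.sqrt t := hst1
            have e3 : ‖X₀ i j‖ ≤ Real.sqrt t * ‖X₀ i j‖ :=
              le_mul_of_one_le_left (norm_nonneg _) hst1
            calc ‖(Real.sqrt t : ℂ) * X₁ i j + X₀ i j + ((Real.sqrt t : ℂ))⁻¹ * Xm i j‖
                ≤ ‖(Real.sqrt t : ℂ) * X₁ i j + X₀ i j‖ + ‖((Real.sqrt t : ℂ))⁻¹ * Xm i j‖ :=
                  norm_add_le _ _
              _ ≤ ‖(Real.sqrt t : ℂ) * X₁ i j‖ + ‖X₀ i j‖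
                  + ‖((Real.sqrt t : ℂ))⁻¹ * Xm i j‖ := by
                  have := norm_add_le ((Real.sqrt t : ℂ) * X₁ i j) (X₀ i j)
                  linarith
              _ ≤ Real.sqrt t * ‖X₁ i j‖ + Real.sqrt t * ‖X₀ i j‖
                  + Real.sqrt t * ‖Xm i j‖ := by rw [e1]; linarith
              _ = Real.sqrt t * (‖X₁ i j‖ + ‖X₀ i j‖ + ‖Xm i j‖) := by ring
              _ ≤ Real.sqrt t * K := mul_le_mul_of_nonneg_left (hKij i j) hst0
        have hDB := det_bound _ _ hBentry
        have hprodB : (∏ i : Fin m ⊕ Fin m,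
              (fun i => if i ∈ s then (1:ℝ) else Real.sqrt t * K) i)
            = (Real.sqrt t * K) ^ p := by
          rw [← Finset.prod_mul_prod_compl s]
          have h1 : (∏ i ∈ s, (if i ∈ s then (1:ℝ) else Real.sqrt t * K)) = 1 :=
            Finset.prod_eq_one (fun i hi => if_pos hi)
          have h2 : (∏ i ∈ sᶜ, (if i ∈ s then (1:ℝ) else Real.sqrt t * K))
              = (Real.sqrt t * K) ^ p := by
            rw [Finset.prod_congr rfl (fun i hi => if_neg (Finset.mem_compl.1 hi)),
              Finset.prod_const, hp]
          rw [h1, h2, one_mul]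
        have hcn : Fintype.card (Fin m ⊕ Fin m) = 2 * m := by simp [two_mul]
        rw [hprodB, hcn] at hDB
        exact hDB
      have hn1 : ‖Complex.exp (c * Real.sqrt t : ℂ)‖ = Real.exp (c * Real.sqrt t) := by
        rw [Complex.norm_exp]
        norm_num
      have hn2 : ‖Complex.exp (-(c * Real.sqrt t) : ℂ)‖ = Real.exp (-(c * Real.sqrt t)) := by
        rw [Complex.norm_exp]
        norm_num
      have hrpow : t ^ (((m:ℝ)+1)/2) = Real.sqrt t ^ (m+1) := by
        rw [Real.sqrt_eq_rpow, ← Real.rpow_natCast (t ^ ((1:ℝ)/2)) (m+1), ← Real.rpow_mul ht0]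
        congr 1
        push_cast
        ring
      have e1 : Real.exp (c * Real.sqrt t) ^ k₁ * Real.exp (-(c * Real.sqrt t)) ^ k₂
          = Real.exp ((((k₁ : ℤ) - k₂ : ℤ) : ℝ) * (c * Real.sqrt t)) := by
        rw [← Real.exp_nat_mul, ← Real.exp_nat_mul, ← Real.exp_add]
        congr 1
        push_cast
        ring
      have e2 : Real.exp ((m:ℝ) * c * Real.sqrt t) * t ^ (((m:ℝ)+1)/2)
            * Real.exp (-(c * Real.sqrt t))
          = Real.exp ((((m : ℤ) - 1 : ℤ) : ℝ) * (c * Real.sqrt t)) * Real.sqrt t ^ (m+1) := by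
        rw [hrpow, mul_right_comm, ← Real.exp_add]
        congr 2
        push_cast
        ring
      have hgnn : (0:ℝ) ≤ Real.exp ((m:ℝ) * c * Real.sqrt t) * t ^ (((m:ℝ)+1)/2)
          * Real.exp (-(c * Real.sqrt t)) := by
        apply mul_nonneg (mul_nonneg (Real.exp_pos _).le (Real.rpow_nonneg ht0 _))
          (Real.exp_pos _).le
      rw [norm_mul, hprod, norm_mul, norm_pow, norm_pow, hn1, hn2,
        Real.norm_of_nonneg hgnn, e1, e2]
      calc Real.exp ((((k₁ : ℤ) - k₂ : ℤ) : ℝ) * (c * Real.sqrt t))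
            * ‖(Matrix.of (s.piecewise (1 : Matrix (Fin m ⊕ Fin m) (Fin m ⊕ Fin m) ℂ)
                (A t))).det‖
          ≤ Real.exp ((((k₁ : ℤ) - k₂ : ℤ) : ℝ) * (c * Real.sqrt t))
              * ((Nat.factorial (2 * m) : ℝ) * (Real.sqrt t * K) ^ p) :=
            mul_le_mul_of_nonneg_left hdet (Real.exp_pos _).le
        _ = (Real.exp ((((k₁ : ℤ) - k₂ : ℤ) : ℝ) * (c * Real.sqrt t)) * Real.sqrt t ^ p)
              * ((Nat.factorial (2 * m) : ℝ) * K ^ p) := by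
            rw [mul_pow]; ring
        _ ≤ (Real.exp ((((m : ℤ) - 1 : ℤ) : ℝ) * (c * Real.sqrt t)) * Real.sqrt t ^ (m+1))
              * ((Nat.factorial (2 * m) : ℝ) * K ^ (2 * m)) := by
            apply mul_le_mul haux _ _ (by positivity)
            · exact mul_le_mul_of_nonneg_left (pow_le_pow_right₀ hK1 (by omega))
                (by positivity)
            · exact mul_nonneg (by positivity) (pow_nonneg hK0 _)
        _ = (Nat.factorial (2 * m) : ℝ) * K ^ (2 * m)
              * (Real.exp ((((m : ℤ) - 1 : ℤ) : ℝ) * (c * Real.sqrt t))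
                * Real.sqrt t ^ (m+1)) := by ring
    have heq : (fun t : ℝ =>
        Matrix.det
            (Matrix.fromBlocks
                (Complex.exp (c * Real.sqrt t) • (1 : Matrix (Fin m) (Fin m) ℂ)) 0 0
                (Complex.exp (-(c * Real.sqrt t)) • (1 : Matrix (Fin m) (Fin m) ℂ)) + A t) -
            Complex.exp (m * c * Real.sqrt t) * Matrix.det (Matrix.toBlocks₂₂ (A t))) = _ :=
      funext key
    rw [heq]
    exact hbig
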